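/- Let C be a covering of a finite nonempty set U. Then C is unary and the family {N(x) : x ∈ U} forms a partition of U (i.e., for all x, y ∈ U, either N(x) = N(y) or N(x) ∩ N(y) = ∅) if and only if reduct(C), the set of irreducible elements of C, is a partition of U (i.e., ⋃ reduct(C) = U and distinct members of reduct(C) are pairwise disjoint). -/
import Mathlib


open Set

/-- A covering of a finite nonempty universe `α`: a family of nonempty subsets whose union is everything. -/
def IsCovering {α : Type*} (C : Set (Set α)) : Prop :=
  (∀ K ∈ C, K.Nonempty) ∧ ⋃₀ C = Set.univ

/-- The second type of covering lower approximation. -/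
def SL {α : Type*} (C : Set (Set α)) (X : Set α) : Set α :=
  ⋃₀ {K | K ∈ C ∧ K ⊆ X}

/-- The second type of covering upper approximation. -/
def SH {α : Type*} (C : Set (Set α)) (X : Set α) : Set α :=
  ⋃₀ {K | K ∈ C ∧ (K ∩ X).Nonempty}

/-- The minimal description of a point. -/
def Md {α : Type*} (C : Set (Set α)) (x : α) : Set (Set α) :=
  {K | K ∈ C ∧ x ∈ K ∧ ∀ S ∈ C, x ∈ S → S ⊆ K → S = K}

/-- A covering is unary if every point has exactly one element in its minimal description. -/
def Unary {α : Type*} (C : Set (Set α)) : Prop :=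
  ∀ x : α, ∃! K, K ∈ Md C x

/-- The neighborhood of a point. -/
def Nbhd {α : Type*} (C : Set (Set α)) (x : α) : Set α :=
  ⋂₀ {K | K ∈ C ∧ x ∈ K}

/-- The indiscernible neighborhood of a point. -/
def IndNbhd {α : Type*} (C : Set (Set α)) (x : α) : Set α :=
  ⋃₀ {K | K ∈ C ∧ x ∈ K}

/-- A member of the covering is reducible if it is a union of other members. -/
def Reducible {α : Type*} (C : Set (Set α)) (K : Set α) : Prop :=
  ∃ D ⊆ C \ {K}, K = ⋃₀ D

/-- The reduct of a covering: its irreducible members. -/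
def reduct {α : Type*} (C : Set (Set α)) : Set (Set α) :=
  {K | K ∈ C ∧ ¬ Reducible C K}

/-- The closure operator induced by the fixed point family of `SL`. -/
def clC {α : Type*} (C : Set (Set α)) (X : Set α) : Set α :=
  ⋂₀ {S | SL C S = S ∧ X ⊆ S}

lemma md_exists_aux {α : Type*} [Fintype α] (C : Set (Set α)) :
    ∀ n : ℕ, ∀ S ∈ C, ∀ x, x ∈ S → S.ncard ≤ n → ∃ K ∈ Md C x, K ⊆ S := by
  intro n
  induction n with
  | zero =>
    intro S hS x hx hcard
    have : S = ∅ := (Set.ncard_eq_zero (Set.toFinite S)).1 (Nat.le_zero.1 hcard)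
    simp [this] at hx
  | succ n ih =>
    intro S hS x hx hcard
    by_cases h : ∀ T ∈ C, x ∈ T → T ⊆ S → T = S
    · exact ⟨S, ⟨hS, hx, h⟩, subset_rfl⟩
    · push_neg at h
      obtain ⟨T, hT, hxT, hTS, hne⟩ := h
      have hlt : T.ncard < S.ncard :=
        Set.ncard_lt_ncard (hTS.ssubset_of_ne hne) (Set.toFinite S)
      obtain ⟨K, hK, hKT⟩ := ih T hT x hxT (by omega)
      exact ⟨K, hK, hKT.trans hTS⟩

lemma reduct_decomp_aux {α : Type*} [Fintype α] (C : Set (Set α)) :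
    ∀ n : ℕ, ∀ S ∈ C, S.ncard ≤ n → ∀ x ∈ S, ∃ K ∈ reduct C, x ∈ K ∧ K ⊆ S := by
  intro n
  induction n with
  | zero =>
    intro S _ hcard x hx
    have : S = ∅ := (Set.ncard_eq_zero (Set.toFinite S)).1 (Nat.le_zero.1 hcard)
    simp [this] at hx
  | succ n ih =>
    intro S hS hcard x hx
    by_cases h : Reducible C S
    · obtain ⟨D, hD, hSD⟩ := h
      rw [hSD] at hx
      obtain ⟨T, hTD, hxT⟩ := hx
      have hTm := hD hTD
      have hTC : T ∈ C := hTm.1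
      have hTne : T ≠ S := by
        intro e; exact hTm.2 (by simp [e])
      have hTS : T ⊆ S := by rw [hSD]; exact subset_sUnion_of_mem hTD
      have hlt : T.ncard < S.ncard :=
        Set.ncard_lt_ncard (hTS.ssubset_of_ne hTne) (Set.toFinite S)
      obtain ⟨K, hK, hxK, hKT⟩ := ih T hTC (by omega) x hxT
      exact ⟨K, hK, hxK, hKT.trans hTS⟩
    · exact ⟨S, ⟨hS, h⟩, hx, subset_rfl⟩

theorem stmt_5 {α : Type*} [Fintype α] [Nonempty α] (C : Set (Set α))
    (hC : IsCovering C) :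
    (Unary C ∧ ∀ x y : α, Nbhd C x = Nbhd C y ∨ Nbhd C x ∩ Nbhd C y = ∅) ↔
    (⋃₀ reduct C = Set.univ ∧
      ∀ K1 ∈ reduct C, ∀ K2 ∈ reduct C, K1 ≠ K2 → K1 ∩ K2 = ∅) := by
  have hself : ∀ x : α, x ∈ Nbhd C x := by
    intro x K hK; exact hK.2
  have huniv : ⋃₀ reduct C = Set.univ := by
    apply Set.eq_univ_of_forall
    intro x
    have : x ∈ ⋃₀ C := hC.2 ▸ Set.mem_univ x
    obtain ⟨S, hS, hxS⟩ := this
    obtain ⟨K, hK, hxK, _⟩ := reduct_decomp_aux C S.ncard S hS le_rfl x hxS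
    exact ⟨K, hK, hxK⟩
  constructor
  · rintro ⟨hU, hN⟩
    -- Nbhd C x is the unique minimal description element, hence Nbhd C x ∈ C
    have hNbhdC : ∀ x : α, Nbhd C x ∈ C ∧
        ∀ S ∈ C, x ∈ S → Nbhd C x ⊆ S := by
      intro x
      obtain ⟨M, hM, hMuniq⟩ := hU x
      have hMin : ∀ S ∈ C, x ∈ S → M ⊆ S := by
        intro S hS hxS
        obtain ⟨K, hK, hKS⟩ := md_exists_aux C S.ncard S hS x hxS le_rfl
        exact (hMuniq K hK) ▸ hKS
      have hEq : Nbhd C x = M := by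
        apply Set.Subset.antisymm
        · exact Set.sInter_subset_of_mem ⟨hM.1, hM.2.1⟩
        · intro z hz T hT
          exact hMin T hT.1 hT.2 hz
      rw [hEq]
      exact ⟨hM.1, hMin⟩
    -- each irreducible element is a neighborhood
    have hirr : ∀ K ∈ reduct C, ∃ x, Nbhd C x = K := by
      intro K hK
      by_contra h
      push_neg at h
      apply hK.2
      refine ⟨{S | ∃ x ∈ K, S = Nbhd C x}, ?_, ?_⟩
      · rintro S ⟨x, hxK, rfl⟩
        exact ⟨(hNbhdC x).1, fun hs => h x (by simpa using hs)⟩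
      · apply Set.Subset.antisymm
        · intro z hz
          exact ⟨Nbhd C z, ⟨z, hz, rfl⟩, hself z⟩
        · rintro z ⟨S, ⟨x, hxK, rfl⟩, hzS⟩
          exact (hNbhdC x).2 K hK.1 hxK hzS
    refine ⟨huniv, ?_⟩
    intro K1 hK1 K2 hK2 hne
    obtain ⟨x, rfl⟩ := hirr K1 hK1
    obtain ⟨y, rfl⟩ := hirr K2 hK2
    rcases hN x y with h | h
    · exact absurd h hne
    · exact h
  · rintro ⟨hUniv, hDisj⟩
    -- for each x, pick the reduct block containing x
    have hblock : ∀ x : α, ∃ K ∈ reduct C, x ∈ K ∧ ∀ S ∈ C, x ∈ S → K ⊆ S := by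
      intro x
      have : x ∈ ⋃₀ reduct C := hUniv ▸ Set.mem_univ x
      obtain ⟨K, hK, hxK⟩ := this
      refine ⟨K, hK, hxK, ?_⟩
      intro S hS hxS
      obtain ⟨K', hK', hxK', hK'S⟩ := reduct_decomp_aux C S.ncard S hS le_rfl x hxS
      by_cases he : K' = K
      · exact he ▸ hK'S
      · exact (Set.eq_empty_iff_forall_notMem.1
          (hDisj K' hK' K hK he) x ⟨hxK', hxK⟩).elim
    have hNb : ∀ x : α, ∃ K ∈ reduct C, Nbhd C x = K ∧ x ∈ K := by
      intro x
      obtain ⟨K, hK, hxK, hmin⟩ := hblock x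
      refine ⟨K, hK, Set.Subset.antisymm ?_ ?_, hxK⟩
      · exact Set.sInter_subset_of_mem ⟨hK.1, hxK⟩
      · intro z hz T hT
        exact hmin T hT.1 hT.2 hz
    constructor
    · intro x
      obtain ⟨K, hK, hxK, hmin⟩ := hblock x
      refine ⟨K, ⟨hK.1, hxK, ?_⟩, ?_⟩
      · intro S hS hxS hSK
        exact Set.Subset.antisymm hSK (hmin S hS hxS)
      · rintro M ⟨hMC, hxM, hMmin⟩
        exact (hMmin K hK.1 hxK (hmin M hMC hxM)).symm
    · intro x y
      obtain ⟨Kx, hKx, hNx, _⟩ := hNb x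
      obtain ⟨Ky, hKy, hNy, _⟩ := hNb y
      by_cases he : Kx = Ky
      · left; rw [hNx, hNy, he]
      · right; rw [hNx, hNy]; exact hDisj Kx hKx Ky hKy he
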